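/- Let N₁ = p₁q₁, N₂ = p₂q₂, a : {0,…,N₁−1}×{0,…,N₂−1} → ℂ, μ₁, μ₂ ∈ ℤ, M₁, M₂ ≥ 0, and ε > 0. Suppose Q₁, Q₂ : ℝ → ℂ satisfy |Q_d(x) − e^{πi x}| ≤ ε for |x| ≤ M_d/p_d (d = 1, 2). Define ℰ(â)_{m₁,m₂} = Σ_{k₁,k₂,l₁,l₂} a_{q₁k₁+l₁,q₂k₂+l₂} ∏_{d=1,2} e^{πi v_d μ_d} Q_d(v_d(m_d − μ_d)) e^{-2πi m_d k_d/p_d} e^{-πi m_d/p_d}, where v_d = −2(l_d − q_d/2)/N_d. Then for all integers (m₁, m₂) with |m_d − μ_d| ≤ M_d for d = 1, 2, |â_{m₁,m₂} − ℰ(â)_{m₁,m₂}| ≤ (Σ_{n₁,n₂} |a_{n₁,n₂}|) · (ε² + 2ε). -/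

import Mathlib

open Complex Real

lemma sum_range_mul {M : Type*} [AddCommMonoid M] (p q : ℕ) (f : ℕ → M) :
    ∑ n ∈ Finset.range (p * q), f n =
      ∑ k ∈ Finset.range p, ∑ l ∈ Finset.range q, f (q * k + l) := by
  induction p with
  | zero => simp
  | succ p ih =>
    rw [Nat.succ_mul, Finset.sum_range_add, ih, Finset.sum_range_succ]
    simp [Nat.mul_comm]

lemma sum_comm4 {M : Type*} [AddCommMonoid M] {α β γ δ : Type*}
    (s : Finset α) (t : Finset β) (u : Finset γ) (w : Finset δ)
    (F : α → β → γ → δ → M) :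
    (∑ a ∈ s, ∑ b ∈ t, ∑ c ∈ u, ∑ d ∈ w, F a b c d) =
      ∑ a ∈ s, ∑ c ∈ u, ∑ b ∈ t, ∑ d ∈ w, F a b c d :=
  Finset.sum_congr rfl fun _ _ => Finset.sum_comm

lemma abs_sum4_le {α β γ δ : Type*} (s : Finset α) (t : Finset β) (u : Finset γ) (w : Finset δ)
    (f : α → β → γ → δ → ℂ) :
    ‖∑ a ∈ s, ∑ b ∈ t, ∑ c ∈ u, ∑ d ∈ w, f a b c d‖ ≤
      ∑ a ∈ s, ∑ b ∈ t, ∑ c ∈ u, ∑ d ∈ w, ‖f a b c d‖ := by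
  refine (norm_sum_le _ _).trans (Finset.sum_le_sum fun a _ => ?_)
  refine (norm_sum_le _ _).trans (Finset.sum_le_sum fun b _ => ?_)
  refine (norm_sum_le _ _).trans (Finset.sum_le_sum fun c _ => ?_)
  exact norm_sum_le _ _

lemma prod_approx (z₁ z₂ w₁ w₂ : ℂ) (ε : ℝ) (hε : 0 ≤ ε)
    (h₁ : ‖z₁‖ = 1) (h₂ : ‖z₂‖ = 1)
    (e₁ : ‖z₁ - w₁‖ ≤ ε) (e₂ : ‖z₂ - w₂‖ ≤ ε) :
    ‖z₁ * z₂ - w₁ * w₂‖ ≤ ε ^ 2 + 2 * ε := by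
  have hw₂ : ‖w₂‖ ≤ 1 + ε := by
    have h := norm_add_le (w₂ - z₂) z₂
    rw [sub_add_cancel] at h
    rw [norm_sub_rev] at h
    linarith
  have key : z₁ * z₂ - w₁ * w₂ = z₁ * (z₂ - w₂) + (z₁ - w₁) * w₂ := by ring
  rw [key]
  refine (norm_add_le _ _).trans ?_
  rw [norm_mul, norm_mul, h₁, one_mul]
  nlinarith [norm_nonneg (z₁ - w₁), norm_nonneg w₂]

lemma exp_arg_eq (P Q K L M U R i : ℂ) (hpC : P ≠ 0) (hqC : Q ≠ 0) :
    -2 * R * i * M * (Q * K + L) / (P * Q) =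
      R * i * (-2 * (L - Q / 2) / (P * Q)) * U +
        R * i * (-2 * (L - Q / 2) / (P * Q) * (M - U)) +
        (-2 * R * i * M * K / P) + (-R * i * M / P) := by
  have hPQ : P * Q ≠ 0 := mul_ne_zero hpC hqC
  have e1 : R * i * (-2 * (L - Q / 2) / (P*Q)) * U = (R * i * (-2 * (L - Q/2)) * U) / (P*Q) := by
    ring
  have e2 : R * i * (-2 * (L - Q / 2) / (P*Q) * (M - U)) =
      (R * i * (-2 * (L - Q/2)) * (M-U)) / (P*Q) := by ring
  have e3 : -2 * R * i * M * K / P = (-2 * R * i * M * K * Q) / (P*Q) := by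
    rw [div_eq_div_iff hpC hPQ]; ring
  have e4 : -R * i * M / P = (-R * i * M * Q) / (P*Q) := by
    rw [div_eq_div_iff hpC hPQ]; ring
  rw [e1, e2, e3, e4, ← add_div, ← add_div, ← add_div,
    div_eq_div_iff hPQ hPQ]
  ring

lemma factor_bound (p q N : ℕ) (hp : 1 ≤ p) (hq : 1 ≤ q) (hN : N = p * q)
    (m μ : ℤ) (M ε : ℝ) (hM : 0 ≤ M) (hε : 0 < ε) (Q : ℝ → ℂ)
    (hQ : ∀ x : ℝ, |x| ≤ M / p → ‖Q x - Complex.exp (π * I * x)‖ ≤ ε)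
    (hm : |(m : ℝ) - μ| ≤ M) (k l : ℕ) (hl : l < q) :
    ‖Complex.exp (-2 * π * I * m * ((q * k + l : ℕ) : ℂ) / N) -
      Complex.exp (π * I * ((-2 * ((l : ℝ) - q / 2) / N : ℝ) : ℂ) * μ) *
        Q ((-2 * ((l : ℝ) - q / 2) / N) * ((m : ℝ) - μ)) *
        Complex.exp (-2 * π * I * m * k / p) *
        Complex.exp (-π * I * m / p)‖ ≤ ε := by
  subst hN
  have hp0 : (0:ℝ) < p := by exact_mod_cast hp
  have hq0 : (0:ℝ) < q := by exact_mod_cast hq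
  have hN0 : (0:ℝ) < ((p * q : ℕ) : ℝ) := by push_cast; positivity
  have hpC : (p:ℂ) ≠ 0 := Nat.cast_ne_zero.mpr (by omega)
  have hqC : (q:ℂ) ≠ 0 := Nat.cast_ne_zero.mpr (by omega)
  set v : ℝ := -2 * ((l : ℝ) - q / 2) / ((p * q : ℕ) : ℝ) with hv
  set x : ℝ := v * ((m : ℝ) - μ) with hx
  have hvb : |v| ≤ 1 / p := by
    rw [hv, abs_div, abs_of_pos hN0, div_le_div_iff₀ hN0 hp0]
    have hl' : (l:ℝ) + 1 ≤ q := by exact_mod_cast hl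
    have habs : |(-2 * ((l:ℝ) - q / 2))| ≤ q := by
      rw [abs_le]; constructor <;> nlinarith
    push_cast
    nlinarith [abs_nonneg (-2 * ((l:ℝ) - q / 2))]
  have hxb : |x| ≤ M / p := by
    rw [hx, abs_mul]
    calc |v| * |(m:ℝ) - μ| ≤ (1/p) * M :=
          mul_le_mul hvb hm (abs_nonneg _) (by positivity)
      _ = M / p := by ring
  have hQx := hQ x hxb
  have key : Complex.exp (-2 * π * I * m * ((q * k + l : ℕ) : ℂ) / ((p * q : ℕ) : ℂ)) =
      Complex.exp (π * I * (v : ℂ) * μ) * Complex.exp (π * I * (x : ℂ)) *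
        Complex.exp (-2 * π * I * m * k / p) * Complex.exp (-π * I * m / p) := by
    rw [← Complex.exp_add, ← Complex.exp_add, ← Complex.exp_add]
    congr 1
    rw [hx, hv]
    push_cast
    exact exp_arg_eq (p:ℂ) (q:ℂ) (k:ℂ) (l:ℂ) (m:ℂ) (μ:ℂ) (π:ℂ) I hpC hqC
  rw [key]
  have hdiff : Complex.exp (π * I * (v : ℂ) * μ) * Complex.exp (π * I * (x : ℂ)) *
        Complex.exp (-2 * π * I * m * k / p) * Complex.exp (-π * I * m / p) -
      Complex.exp (π * I * (v : ℂ) * μ) * Q x *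
        Complex.exp (-2 * π * I * m * k / p) * Complex.exp (-π * I * m / p) =
      (Complex.exp (π * I * (x : ℂ)) - Q x) *
        (Complex.exp (π * I * (v : ℂ) * μ) * Complex.exp (-2 * π * I * m * k / p) *
          Complex.exp (-π * I * m / p)) := by ring
  rw [hdiff, norm_mul]
  have hA : ‖Complex.exp (π * I * (v : ℂ) * μ)‖ = 1 := by
    rw [show (π : ℂ) * I * (v : ℂ) * μ = ((π * v * μ : ℝ) : ℂ) * I by push_cast; ring,
      Complex.norm_exp_ofReal_mul_I]
  have hB : ‖Complex.exp (-2 * π * I * (m:ℂ) * k / p)‖ = 1 := by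
    rw [show -2 * (π:ℂ) * I * (m:ℂ) * k / p = ((-2 * π * m * k / p : ℝ) : ℂ) * I by
      push_cast; ring, Complex.norm_exp_ofReal_mul_I]
  have hC : ‖Complex.exp (-(π:ℂ) * I * m / p)‖ = 1 := by
    rw [show -(π:ℂ) * I * (m:ℂ) / p = ((-π * m / p : ℝ) : ℂ) * I by
      push_cast; ring, Complex.norm_exp_ofReal_mul_I]
  rw [norm_mul, norm_mul, hA, hB, hC]
  rw [norm_sub_rev]
  simpa using hQx

lemma abs_exp_exact (p q k l : ℕ) (m : ℤ) :
    ‖Complex.exp (-2 * π * I * (m:ℂ) * ((q * k + l : ℕ) : ℂ) / ((p * q : ℕ) : ℂ))‖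
      = 1 := by
  rw [show -2 * (π:ℂ) * I * (m:ℂ) * ((q * k + l : ℕ) : ℂ) / ((p * q : ℕ) : ℂ) =
      ((-2 * π * m * (q * k + l : ℕ) / (p * q : ℕ) : ℝ) : ℂ) * I by push_cast; ring,
    Complex.norm_exp_ofReal_mul_I]


lemma pointwise_bound (A E₁ E₂ F₁ F₂ : ℂ) (ε : ℝ) (hε : 0 ≤ ε)
    (h₁ : ‖E₁‖ = 1) (h₂ : ‖E₂‖ = 1)
    (e₁ : ‖E₁ - F₁‖ ≤ ε) (e₂ : ‖E₂ - F₂‖ ≤ ε) :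
    ‖A * E₁ * E₂ - A * F₁ * F₂‖ ≤ ‖A‖ * (ε ^ 2 + 2 * ε) := by
  rw [show A * E₁ * E₂ - A * F₁ * F₂ = A * (E₁ * E₂ - F₁ * F₂) by ring, norm_mul]
  exact mul_le_mul_of_nonneg_left (prod_approx E₁ E₂ F₁ F₂ ε hε h₁ h₂ e₁ e₂)
    (norm_nonneg A)

theorem pft_error_bound_2d (p₁ q₁ N₁ p₂ q₂ N₂ : ℕ)
    (hp₁ : 1 ≤ p₁) (hq₁ : 1 ≤ q₁) (hN₁ : N₁ = p₁ * q₁)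
    (hp₂ : 1 ≤ p₂) (hq₂ : 1 ≤ q₂) (hN₂ : N₂ = p₂ * q₂)
    (a : ℕ → ℕ → ℂ) (μ₁ μ₂ : ℤ) (M₁ M₂ : ℝ) (hM₁ : 0 ≤ M₁) (hM₂ : 0 ≤ M₂)
    (ε : ℝ) (hε : 0 < ε) (Q₁ Q₂ : ℝ → ℂ)
    (hQ₁ : ∀ x : ℝ, |x| ≤ M₁ / p₁ →
      ‖Q₁ x - Complex.exp (π * I * x)‖ ≤ ε)
    (hQ₂ : ∀ x : ℝ, |x| ≤ M₂ / p₂ →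
      ‖Q₂ x - Complex.exp (π * I * x)‖ ≤ ε)
    (m₁ m₂ : ℤ) (hm₁ : |(m₁ : ℝ) - μ₁| ≤ M₁) (hm₂ : |(m₂ : ℝ) - μ₂| ≤ M₂) :
    ‖(∑ n₁ ∈ Finset.range N₁, ∑ n₂ ∈ Finset.range N₂,
            a n₁ n₂ * Complex.exp (-2 * π * I * m₁ * n₁ / N₁) *
              Complex.exp (-2 * π * I * m₂ * n₂ / N₂)) -
          ∑ k₁ ∈ Finset.range p₁, ∑ k₂ ∈ Finset.range p₂,
            ∑ l₁ ∈ Finset.range q₁, ∑ l₂ ∈ Finset.range q₂,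
              a (q₁ * k₁ + l₁) (q₂ * k₂ + l₂) *
                (Complex.exp (π * I *
                    ((-2 * ((l₁ : ℝ) - q₁ / 2) / N₁ : ℝ) : ℂ) * μ₁) *
                  Q₁ ((-2 * ((l₁ : ℝ) - q₁ / 2) / N₁) * ((m₁ : ℝ) - μ₁)) *
                  Complex.exp (-2 * π * I * m₁ * k₁ / p₁) *
                  Complex.exp (-π * I * m₁ / p₁)) *
                (Complex.exp (π * I *
                    ((-2 * ((l₂ : ℝ) - q₂ / 2) / N₂ : ℝ) : ℂ) * μ₂) *
                  Q₂ ((-2 * ((l₂ : ℝ) - q₂ / 2) / N₂) * ((m₂ : ℝ) - μ₂)) *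
                  Complex.exp (-2 * π * I * m₂ * k₂ / p₂) *
                  Complex.exp (-π * I * m₂ / p₂))‖ ≤
      (∑ n₁ ∈ Finset.range N₁, ∑ n₂ ∈ Finset.range N₂,
          ‖a n₁ n₂‖) * (ε ^ 2 + 2 * ε) := by
  subst hN₁ hN₂
  have hc0 : (0:ℝ) ≤ ε := hε.le
  simp only [sum_range_mul p₁ q₁, sum_range_mul p₂ q₂]
  conv_lhs => rw [sum_comm4]
  conv_rhs => rw [sum_comm4]
  simp only [← Finset.sum_sub_distrib]
  refine (abs_sum4_le _ _ _ _ _).trans ?_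
  simp only [Finset.sum_mul]
  refine Finset.sum_le_sum fun k₁ _ => Finset.sum_le_sum fun k₂ _ =>
    Finset.sum_le_sum fun l₁ hl₁ => Finset.sum_le_sum fun l₂ hl₂ => ?_
  exact pointwise_bound _ _ _ _ _ ε hc0
    (abs_exp_exact p₁ q₁ k₁ l₁ m₁) (abs_exp_exact p₂ q₂ k₂ l₂ m₂)
    (factor_bound p₁ q₁ (p₁ * q₁) hp₁ hq₁ rfl m₁ μ₁ M₁ ε hM₁ hε Q₁ hQ₁ hm₁ k₁ l₁
      (Finset.mem_range.mp hl₁))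
    (factor_bound p₂ q₂ (p₂ * q₂) hp₂ hq₂ rfl m₂ μ₂ M₂ ε hM₂ hε Q₂ hQ₂ hm₂ k₂ l₂
      (Finset.mem_range.mp hl₂))
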